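/- Let (α_i) be a sequence of positive reals such that inf{α_i : i ∉ I} = 0 whenever ∑_{i∈I} α_i < ∞. Then there exists a subsequence (α_{i_j}) with ∑_j α_{i_j} = ∞ and ∑_j α_{i_j}^p < ∞ for every p ∈ (1,∞). -/

import Mathlib

open scoped ENNReal

namespace Stmt1Aux

variable (α : ℕ → ℝ)

open Classical in
noncomputable def leastIdx (hex : ∀ n N : ℕ, ∃ i, N < i ∧ α i < (1/2:ℝ)^n) (n N : ℕ) : ℕ :=
  Nat.find (hex n N)

open Classical in
theorem leastIdx_spec (hex : ∀ n N : ℕ, ∃ i, N < i ∧ α i < (1/2:ℝ)^n) (n N : ℕ) :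
    N < leastIdx α hex n N ∧ α (leastIdx α hex n N) < (1/2:ℝ)^n :=
  Nat.find_spec (hex n N)

open Classical in
theorem leastIdx_min (hex : ∀ n N : ℕ, ∃ i, N < i ∧ α i < (1/2:ℝ)^n) {n N i : ℕ}
    (h1 : N < i) (h2 : α i < (1/2:ℝ)^n) : leastIdx α hex n N ≤ i :=
  Nat.find_min' _ ⟨h1, h2⟩

noncomputable def S (hex : ∀ n N : ℕ, ∃ i, N < i ∧ α i < (1/2:ℝ)^n) : ℕ → ℕ × ℕ × ℝ
  | 0 => (leastIdx α hex 0 0, 0, 0)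
  | j+1 =>
    let p := S hex j
    let t' := p.2.2 + α p.1
    let n' := if 1 ≤ t' then p.2.1 + 1 else p.2.1
    (leastIdx α hex n' p.1, n', if 1 ≤ t' then 0 else t')

theorem S_step (hex : ∀ n N : ℕ, ∃ i, N < i ∧ α i < (1/2:ℝ)^n) (j : ℕ) :
    (S α hex (j+1)).1 = leastIdx α hex ((S α hex (j+1)).2.1) ((S α hex j).1) ∧
    ((1 ≤ (S α hex j).2.2 + α (S α hex j).1 ∧ (S α hex (j+1)).2.1 = (S α hex j).2.1 + 1 ∧
        (S α hex (j+1)).2.2 = 0) ∨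
      ((S α hex j).2.2 + α (S α hex j).1 < 1 ∧ (S α hex (j+1)).2.1 = (S α hex j).2.1 ∧
        (S α hex (j+1)).2.2 = (S α hex j).2.2 + α (S α hex j).1)) := by
  by_cases hc : 1 ≤ (S α hex j).2.2 + α (S α hex j).1
  · refine ⟨?_, Or.inl ⟨hc, ?_, ?_⟩⟩ <;> simp [S, hc]
  · refine ⟨?_, Or.inr ⟨lt_of_not_ge hc, ?_, ?_⟩⟩ <;> simp [S, hc]

end Stmt1Aux

open Stmt1Aux

/-- If `(α i)` is a sequence of positive reals such that
`inf {α i : i ∉ I} = 0` whenever `∑_{i ∈ I} α i < ∞`, then there is a subsequence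
`(α (σ j))` with `∑_j α (σ j) = ∞` and `∑_j (α (σ j))^p < ∞` for every `p ∈ (1, ∞)`. -/
theorem stmt1 (α : ℕ → ℝ) (hα : ∀ i, 0 < α i)
    (h : ∀ I : Set ℕ, (∑' i : I, ENNReal.ofReal (α (i : ℕ))) < ⊤ →
      (⨅ i : ↥Iᶜ, ENNReal.ofReal (α (i : ℕ))) = 0) :
    ∃ σ : ℕ → ℕ, StrictMono σ ∧ (∑' j : ℕ, ENNReal.ofReal (α (σ j))) = ⊤ ∧
      ∀ p : ℝ, 1 < p → (∑' j : ℕ, ENNReal.ofReal (α (σ j) ^ p)) < ⊤ := by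
  classical
  -- Step 1: for every ε > 0, the sum over `{i | α i < ε}` is infinite.
  have sumTop : ∀ ε : ℝ, 0 < ε →
      (∑' i : {i : ℕ | α i < ε}, ENNReal.ofReal (α (i : ℕ))) = ⊤ := by
    intro ε hε
    by_contra hne
    have h0 := h _ (lt_top_iff_ne_top.2 hne)
    have hle : ENNReal.ofReal ε ≤ ⨅ i : ↥({i : ℕ | α i < ε}ᶜ), ENNReal.ofReal (α (i : ℕ)) := by
      refine le_iInf fun i => ENNReal.ofReal_le_ofReal ?_
      exact not_lt.1 i.2
    rw [h0] at hle
    exact (ENNReal.ofReal_pos.2 hε).not_ge hle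
  -- Step 2: tails of those sets also have infinite sum.
  have htop : ∀ n N : ℕ,
      (∑' i : {i : ℕ | N < i ∧ α i < (1/2:ℝ)^n}, ENNReal.ofReal (α (i : ℕ))) = ⊤ := by
    intro n N
    have hε : (0:ℝ) < (1/2:ℝ)^n := by positivity
    by_contra hne
    have hBlt : (∑' i : {i : ℕ | N < i ∧ α i < (1/2:ℝ)^n}, ENNReal.ofReal (α (i : ℕ))) < ⊤ :=
      lt_top_iff_ne_top.2 hne
    have hClt : (∑' i : (Set.Iic N), ENNReal.ofReal (α (i : ℕ))) < ⊤ := by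
      haveI : Fintype (Set.Iic N) := (Set.finite_Iic N).fintype
      rw [tsum_fintype]
      exact ENNReal.sum_lt_top.2 fun a _ => ENNReal.ofReal_lt_top
    have hsub : {i : ℕ | α i < (1/2:ℝ)^n} ⊆
        {i : ℕ | N < i ∧ α i < (1/2:ℝ)^n} ∪ Set.Iic N := by
      intro i hi
      by_cases hNi : N < i
      · exact Or.inl ⟨hNi, hi⟩
      · exact Or.inr (not_lt.1 hNi)
    have := calc
      (⊤:ℝ≥0∞) = ∑' i : {i : ℕ | α i < (1/2:ℝ)^n}, ENNReal.ofReal (α (i : ℕ)) :=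
        (sumTop _ hε).symm
      _ ≤ ∑' i : ↥({i : ℕ | N < i ∧ α i < (1/2:ℝ)^n} ∪ Set.Iic N),
          ENNReal.ofReal (α (i : ℕ)) := ENNReal.tsum_mono_subtype (fun i : ℕ => ENNReal.ofReal (α i)) hsub
      _ ≤ (∑' i : {i : ℕ | N < i ∧ α i < (1/2:ℝ)^n}, ENNReal.ofReal (α (i : ℕ))) +
          ∑' i : (Set.Iic N), ENNReal.ofReal (α (i : ℕ)) :=
        ENNReal.tsum_union_le (fun i : ℕ => ENNReal.ofReal (α i)) _ _
    exact absurd (lt_of_le_of_lt this (ENNReal.add_lt_top.2 ⟨hBlt, hClt⟩)) (lt_irrefl _)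
  -- Step 3: existence of indices.
  have hex : ∀ n N : ℕ, ∃ i, N < i ∧ α i < (1/2:ℝ)^n := by
    intro n N
    by_contra hne
    push_neg at hne
    have hempty : {i : ℕ | N < i ∧ α i < (1/2:ℝ)^n} = (∅ : Set ℕ) := by
      ext i; simp only [Set.mem_setOf_eq, Set.mem_empty_iff_false, iff_false, not_and, not_lt]
      exact fun hi => hne i hi
    have := htop n N
    rw [hempty] at this
    simp at this
  -- Notation for the recursive construction.
  set σ : ℕ → ℕ := fun j => (S α hex j).1 with hσdef
  set nn : ℕ → ℕ := fun j => (S α hex j).2.1 with hnndef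
  set tt : ℕ → ℝ := fun j => (S α hex j).2.2 with httdef
  have hcase : ∀ j, (σ (j+1) = leastIdx α hex (nn (j+1)) (σ j)) ∧
      ((1 ≤ tt j + α (σ j) ∧ nn (j+1) = nn j + 1 ∧ tt (j+1) = 0) ∨
        (tt j + α (σ j) < 1 ∧ nn (j+1) = nn j ∧ tt (j+1) = tt j + α (σ j))) :=
    fun j => S_step α hex j
  have hnn0 : nn 0 = 0 := rfl
  have htt0 : tt 0 = 0 := rfl
  have hσ0 : α (σ 0) < 1 := by
    have := (leastIdx_spec α hex 0 0).2
    have h' : α (leastIdx α hex 0 0) < 1 := by simpa using this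
    exact h'
  have hstrict : StrictMono σ := by
    refine strictMono_nat_of_lt_succ fun j => ?_
    have h1 := (hcase j).1
    have h2 := (leastIdx_spec α hex (nn (j+1)) (σ j)).1
    rw [← h1] at h2
    exact h2
  have halpha : ∀ j, α (σ j) < (1/2:ℝ)^(nn j) := by
    intro j
    cases j with
    | zero => rw [hnn0]; simpa using hσ0
    | succ j =>
      have h1 := (hcase j).1
      have h2 := (leastIdx_spec α hex (nn (j+1)) (σ j)).2
      rw [← h1] at h2
      exact h2
  have halpha1 : ∀ j, α (σ j) < 1 := fun j =>
    lt_of_lt_of_le (halpha j) (pow_le_one₀ (by norm_num) (by norm_num))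
  have ht01 : ∀ j, 0 ≤ tt j ∧ tt j < 1 := by
    intro j
    induction j with
    | zero => rw [htt0]; norm_num
    | succ j ih =>
      rcases (hcase j).2 with ⟨hc', hn, ht⟩ | ⟨hc', hn, ht⟩
      · rw [ht]; norm_num
      · rw [ht]
        have := hα (σ j)
        constructor
        · linarith [ih.1]
        · exact hc'
  have hmono : Monotone nn := by
    refine monotone_nat_of_le_succ fun j => ?_
    rcases (hcase j).2 with ⟨_, hn, _⟩ | ⟨_, hn, _⟩ <;> rw [hn] <;> omega
  have hgrow : ∀ J, (nn J : ℝ) + tt J ≤ ∑ j ∈ Finset.range J, α (σ j) := by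
    intro J
    induction J with
    | zero => rw [hnn0, htt0]; simp
    | succ J ih =>
      rw [Finset.sum_range_succ]
      rcases (hcase J).2 with ⟨hc', hn, ht⟩ | ⟨hc', hn, ht⟩
      · rw [hn, ht]
        push_cast
        linarith
      · rw [hn, ht]
        linarith
  -- Step 4: the block counter is unbounded.
  have hcore : ∀ J, ∃ j, nn J < nn j := by
    intro J
    by_contra hb
    push_neg at hb
    have hconst : ∀ j, J ≤ j → nn j = nn J := fun j hj => le_antisymm (hb j) (hmono hj)
    have hnoreset : ∀ j, J ≤ j →
        tt (j+1) = tt j + α (σ j) ∧ σ (j+1) = leastIdx α hex (nn J) (σ j) := by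
      intro j hj
      rcases (hcase j).2 with ⟨h1, h2, h3⟩ | ⟨h1, h2, h3⟩
      · exfalso
        have e1 : nn j = nn J := hconst j hj
        have e2 : nn (j+1) = nn J := hconst (j+1) (hj.trans (Nat.le_succ j))
        omega
      · have e2 : nn (j+1) = nn J := hconst (j+1) (hj.trans (Nat.le_succ j))
        refine ⟨h3, ?_⟩
        rw [(hcase j).1, e2]
    have hpartial : ∀ K, tt (J+1+K) = tt (J+1) + ∑ k ∈ Finset.range K, α (σ (J+1+k)) := by
      intro K
      induction K with
      | zero => simp
      | succ K ih =>
        have hidx : J + 1 + (K + 1) = (J + 1 + K) + 1 := rfl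
        rw [hidx, (hnoreset (J+1+K) (by omega)).1, ih, Finset.sum_range_succ]
        ring
    have henum : ∀ a, σ J < a → α a < (1/2:ℝ)^(nn J) → ∃ k, σ (J + 1 + k) = a := by
      intro a ha hαa
      set P := fun j => J ≤ j ∧ σ j < a with hP
      have hJa : J ≤ a := le_trans hstrict.le_apply ha.le
      have hPJ : P J := ⟨le_rfl, ha⟩
      set j0 := Nat.findGreatest P a with hj0
      have hspec : P j0 := Nat.findGreatest_spec hJa hPJ
      have hgeJ : J ≤ j0 := hspec.1
      have hσsucc : σ (j0+1) = leastIdx α hex (nn J) (σ j0) := (hnoreset j0 hgeJ).2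
      have hle : σ (j0+1) ≤ a := by
        rw [hσsucc]
        exact leastIdx_min α hex hspec.2 hαa
      rcases lt_or_eq_of_le hle with hlt | heq
      · exfalso
        have hP1 : P (j0+1) := ⟨hgeJ.trans (Nat.le_succ j0), hlt⟩
        have hub : j0 + 1 ≤ a := le_trans hstrict.le_apply hlt.le
        exact Nat.findGreatest_is_greatest (Nat.lt_succ_self j0) hub hP1
      · exact ⟨j0 - J, by rw [show J + 1 + (j0 - J) = j0 + 1 by omega]; exact heq⟩
    have hsub : {i : ℕ | σ J < i ∧ α i < (1/2:ℝ)^(nn J)} ⊆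
        Set.range (fun k => σ (J + 1 + k)) := by
      rintro a ⟨h1, h2⟩
      obtain ⟨k, hk⟩ := henum a h1 h2
      exact ⟨k, hk⟩
    have hinj : Function.Injective (fun k => σ (J+1+k)) := by
      intro a b hab
      have := hstrict.injective hab
      omega
    have h1 : (⊤:ℝ≥0∞) ≤ ∑' k : ℕ, ENNReal.ofReal (α (σ (J+1+k))) := by
      calc (⊤:ℝ≥0∞)
          = ∑' i : {i : ℕ | σ J < i ∧ α i < (1/2:ℝ)^(nn J)}, ENNReal.ofReal (α (i : ℕ)) :=
            (htop (nn J) (σ J)).symm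
        _ ≤ ∑' i : ↥(Set.range (fun k => σ (J + 1 + k))), ENNReal.ofReal (α (i : ℕ)) :=
            ENNReal.tsum_mono_subtype (fun i : ℕ => ENNReal.ofReal (α i)) hsub
        _ = ∑' k : ℕ, ENNReal.ofReal (α (σ (J+1+k))) :=
            tsum_range (fun i : ℕ => ENNReal.ofReal (α i)) hinj
    have h2 : (∑' k : ℕ, ENNReal.ofReal (α (σ (J+1+k)))) ≤ 1 := by
      rw [ENNReal.tsum_eq_iSup_nat]
      refine iSup_le fun K => ?_
      rw [← ENNReal.ofReal_sum_of_nonneg (fun i _ => (hα _).le)]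
      rw [← ENNReal.ofReal_one]
      apply ENNReal.ofReal_le_ofReal
      have hp := hpartial K
      have h3 := (ht01 (J+1+K)).2
      have h4 := (ht01 (J+1)).1
      linarith
    have : (⊤:ℝ≥0∞) ≤ 1 := h1.trans h2
    simp at this
  have hnunb : ∀ m, ∃ j, m ≤ nn j := by
    intro m
    induction m with
    | zero => exact ⟨0, Nat.zero_le _⟩
    | succ m ih =>
      obtain ⟨j, hj⟩ := ih
      obtain ⟨j', hj'⟩ := hcore j
      exact ⟨j', by omega⟩
  refine ⟨σ, hstrict, ?_, ?_⟩
  · -- divergence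
    have key : ∀ m : ℕ, (m : ℝ≥0∞) ≤ ∑' j : ℕ, ENNReal.ofReal (α (σ j)) := by
      intro m
      obtain ⟨J, hJ⟩ := hnunb m
      calc (m:ℝ≥0∞) = ENNReal.ofReal (m:ℝ) := (ENNReal.ofReal_natCast m).symm
        _ ≤ ENNReal.ofReal (∑ j ∈ Finset.range J, α (σ j)) := by
            apply ENNReal.ofReal_le_ofReal
            have h4 := (ht01 J).1
            have h5 : (m:ℝ) ≤ (nn J : ℝ) := by exact_mod_cast hJ
            linarith [hgrow J]
        _ = ∑ j ∈ Finset.range J, ENNReal.ofReal (α (σ j)) :=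
            ENNReal.ofReal_sum_of_nonneg fun i _ => (hα _).le
        _ ≤ ∑' j : ℕ, ENNReal.ofReal (α (σ j)) := ENNReal.sum_le_tsum _
    refine ENNReal.eq_top_of_forall_nnreal_le fun r => le_trans ?_ (key ⌈r⌉₊)
    exact_mod_cast Nat.le_ceil r
  · -- p-summability
    intro p hp
    set c := (1/2:ℝ) ^ (p-1) with hcdef
    have hc0 : 0 < c := Real.rpow_pos_of_pos (by norm_num) _
    have hc1 : c < 1 := Real.rpow_lt_one (by norm_num) (by norm_num) (by linarith)
    have key : ∀ j, α (σ j) ^ p ≤ c ^ (nn j) * α (σ j) := by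
      intro j
      have h1 : α (σ j) ^ p = α (σ j) ^ (p-1) * α (σ j) := by
        nth_rewrite 1 [show p = (p-1) + 1 by ring]
        rw [Real.rpow_add (hα (σ j)), Real.rpow_one]
      have h2 : α (σ j) ^ (p-1) ≤ ((1/2:ℝ)^(nn j)) ^ (p-1) :=
        Real.rpow_le_rpow (hα _).le (halpha j).le (by linarith)
      have h3 : ((1/2:ℝ)^(nn j)) ^ (p-1) = c ^ (nn j) := by
        rw [← Real.rpow_natCast (1/2:ℝ) (nn j), ← Real.rpow_mul (by norm_num), mul_comm,
          Real.rpow_mul (by norm_num), Real.rpow_natCast]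
      rw [h1]
      rw [h3] at h2
      exact mul_le_mul_of_nonneg_right h2 (hα _).le
    have inv : ∀ J, ∑ j ∈ Finset.range J, α (σ j) ^ p ≤
        2 * ∑ m ∈ Finset.range (nn J), c ^ m + c ^ (nn J) * tt J := by
      intro J
      induction J with
      | zero => rw [hnn0, htt0]; simp
      | succ J ih =>
        rw [Finset.sum_range_succ]
        have hk := key J
        have hcn : (0:ℝ) ≤ c ^ (nn J) := (pow_pos hc0 _).le
        rcases (hcase J).2 with ⟨hcc, hn, ht⟩ | ⟨hcc, hn, ht⟩
        · rw [hn, ht, Finset.sum_range_succ]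
          have hcc' : tt J + α (σ J) < 2 := by
            have := halpha1 J
            have := (ht01 J).2
            linarith
          have hmul : c ^ (nn J) * tt J + c ^ (nn J) * α (σ J) ≤ 2 * c ^ (nn J) := by
            nlinarith
          linarith
        · rw [hn, ht]
          have hexp : c ^ (nn J) * (tt J + α (σ J)) =
              c ^ (nn J) * tt J + c ^ (nn J) * α (σ J) := by ring
          linarith
    have hbound : ∀ J, ∑ j ∈ Finset.range J, α (σ j) ^ p ≤ 2 * (1-c)⁻¹ + 1 := by
      intro J
      refine (inv J).trans ?_
      have hgeom : ∑ m ∈ Finset.range (nn J), c ^ m ≤ (1-c)⁻¹ :=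
        sum_le_hasSum _ (fun i _ => (pow_pos hc0 i).le)
          (hasSum_geometric_of_lt_one hc0.le hc1)
      have hcn1 : c ^ (nn J) ≤ 1 := pow_le_one₀ hc0.le hc1.le
      have hcn0 : (0:ℝ) ≤ c ^ (nn J) := (pow_pos hc0 _).le
      have ht1 := (ht01 J).1
      have ht2 := (ht01 J).2
      have hlast : c ^ (nn J) * tt J ≤ 1 := by nlinarith
      linarith
    rw [ENNReal.tsum_eq_iSup_nat]
    have hsup : (⨆ K, ∑ j ∈ Finset.range K, ENNReal.ofReal (α (σ j) ^ p)) ≤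
        ENNReal.ofReal (2 * (1-c)⁻¹ + 1) := by
      refine iSup_le fun J => ?_
      rw [← ENNReal.ofReal_sum_of_nonneg (fun i _ => Real.rpow_nonneg (hα _).le p)]
      exact ENNReal.ofReal_le_ofReal (hbound J)
    exact lt_of_le_of_lt hsup ENNReal.ofReal_lt_top
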